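/- Let G be a graph containing a subgraph K isomorphic to K_{2,3} with V(K) = {x₁, x₂, x₃, x₄, x₅} and E(K) = {x_i x_j : i ∈ {1,2}, j ∈ {3,4,5}}. Suppose there is an x₁x₂-path P in G − {x₃, x₄, x₅} and an internal vertex v of P such that the subgraph of G induced by (V(G) \ V(P)) ∪ {v} contains a circuit C with v ∈ V(C) and |V(C) ∩ {x₃, x₄, x₅}| = 2. Then G contains a TK_5. -/

import Mathlib

open SimpleGraph

/-! ### Basic notions: subdivisions, planarity (via Kuratowski), connectivity -/

/-- A realization of a subdivision of `H` inside `G` whose branch vertices are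
given by the injective map `b`: for every edge of `H` there is a path of `G`
between the corresponding branch vertices, these paths are internally disjoint
and internally avoid the branch vertices. -/
def SubdivWith {α V : Type*} (H : SimpleGraph α) (G : SimpleGraph V) (b : α → V) : Prop :=
  Function.Injective b ∧
  ∃ P : ∀ i j : α, H.Adj i j → G.Walk (b i) (b j),
    (∀ i j (h : H.Adj i j), (P i j h).IsPath) ∧
    (∀ i j (h : H.Adj i j), ∀ v ∈ (P i j h).support, v ∈ Set.range b → v = b i ∨ v = b j) ∧
    (∀ i j k l (h : H.Adj i j) (h' : H.Adj k l), s(i, j) ≠ s(k, l) →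
      ∀ v, v ∈ (P i j h).support → v ∈ (P k l h').support → v ∈ Set.range b)

/-- `G` contains a subdivision of `H` (as a subgraph). -/
def ContainsSubdiv {α V : Type*} (H : SimpleGraph α) (G : SimpleGraph V) : Prop :=
  ∃ b : α → V, SubdivWith H G b

/-- `G` contains a `TK₅`, i.e. a subdivision of `K₅`. -/
def ContainsTK5 {V : Type*} (G : SimpleGraph V) : Prop :=
  ContainsSubdiv (⊤ : SimpleGraph (Fin 5)) G

/-- `G` contains a `TK₃,₃`, i.e. a subdivision of `K₃,₃`. -/
def ContainsTK33 {V : Type*} (G : SimpleGraph V) : Prop :=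
  ContainsSubdiv (completeBipartiteGraph (Fin 3) (Fin 3)) G

/-- Planarity of a graph, rendered combinatorially through Kuratowski's
characterization: a graph is planar iff it contains no subdivision of `K₅`
and no subdivision of `K₃,₃`. -/
def IsPlanar {V : Type*} (G : SimpleGraph V) : Prop :=
  ¬ ContainsTK5 G ∧ ¬ ContainsTK33 G

/-- `κ(G[A]) ≥ k` : the subgraph of `G` induced on `A` is `k`-connected:
`A` has more than `k` vertices and removing fewer than `k` vertices of `A`
leaves the induced subgraph connected. -/
def KConnOn {V : Type*} (G : SimpleGraph V) (A : Set V) (k : ℕ) : Prop :=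
  k < A.ncard ∧ ∀ s : Set V, s ⊆ A → s.ncard < k → (G.induce (A \ s)).Connected

/-- `κ(G) ≥ k` : `G` is `k`-connected. -/
def KConn {V : Type*} (G : SimpleGraph V) (k : ℕ) : Prop :=
  KConnOn G Set.univ k

/-- The vertex connectivity `κ(G)`. -/
noncomputable def kappa {V : Type*} (G : SimpleGraph V) : ℕ :=
  sSup {k : ℕ | KConn G k}

/-- A stable (independent) set of vertices. -/
def StableSet {V : Type*} (G : SimpleGraph V) (s : Set V) : Prop :=
  ∀ u ∈ s, ∀ v ∈ s, ¬ G.Adj u v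

/-- `a` is an apex vertex of `G` : `G - a` is planar. -/
def IsApexVertex {V : Type*} (G : SimpleGraph V) (a : V) : Prop :=
  IsPlanar (G.induce {a}ᶜ)

/-- `G` is an apex graph. -/
def IsApexGraph {V : Type*} (G : SimpleGraph V) : Prop :=
  ∃ a, IsApexVertex G a

/-- `P` is an induced path of `G` (as a walk that is a path whose vertex set
spans no further edges of `G`). -/
def IsInducedPathW {V : Type*} (G : SimpleGraph V) {x y : V} (P : G.Walk x y) : Prop :=
  P.IsPath ∧ ∀ u v, u ∈ P.support → v ∈ P.support → G.Adj u v → s(u, v) ∈ P.edges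

/-- `B` is (the vertex set of) a nontrivial bridge of `S` in `G`, i.e. a
connected component of `G - S`. -/
def IsBridgeComp {V : Type*} (G : SimpleGraph V) (S : Set V) (B : Set V) : Prop :=
  B.Nonempty ∧ (∀ v ∈ B, v ∉ S) ∧ (G.induce B).Connected ∧
  ∀ u ∈ B, ∀ v, G.Adj u v → v ∉ S → v ∈ B

/-! ### Blocks, cutvertices, chains of blocks (relative to a vertex set `A`) -/

/-- `B ⊆ V` induces a connected subgraph. -/
def ConnOn {V : Type*} (G : SimpleGraph V) (B : Set V) : Prop :=
  B.Nonempty ∧ (G.induce B).Connected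

/-- `B` induces a `2`-connected subgraph in the block sense: connected, and
no single vertex of `B` disconnects it (a single edge counts). -/
def BiconnOn {V : Type*} (G : SimpleGraph V) (B : Set V) : Prop :=
  ConnOn G B ∧ ∀ v ∈ B, (B \ {v}).Nonempty → (G.induce (B \ {v})).Connected

/-- `B` is (the vertex set of) a block of the subgraph of `G` induced on `A`:
a maximal subset of `A` inducing a `2`-connected subgraph (or an edge). -/
def IsBlockOf {V : Type*} (G : SimpleGraph V) (A B : Set V) : Prop :=
  B ⊆ A ∧ BiconnOn G B ∧ ∀ B', B' ⊆ A → BiconnOn G B' → B ⊆ B' → B = B'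

/-- `v` is a cutvertex of the (connected) subgraph of `G` induced on `A`. -/
def IsCutvertexOf {V : Type*} (G : SimpleGraph V) (A : Set V) (v : V) : Prop :=
  v ∈ A ∧ (G.induce A).Connected ∧ ¬ (G.induce (A \ {v})).Connected

/-- `B` is a leaf block of the subgraph of `G` induced on `A` : a block
containing at most one cutvertex. -/
def IsLeafBlockOf {V : Type*} (G : SimpleGraph V) (A B : Set V) : Prop :=
  IsBlockOf G A B ∧ {v ∈ B | IsCutvertexOf G A v}.Subsingleton

/-- The block `B` of the subgraph of `G` induced on `A` meets `S` internally:
`S` contains a vertex of `B` that is not a cutvertex. -/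
def MeetsInternally {V : Type*} (G : SimpleGraph V) (A B S : Set V) : Prop :=
  ∃ v ∈ B ∩ S, ¬ IsCutvertexOf G A v

/-- The subgraph of `G` induced on `A` is a chain of blocks: its block tree is
a path, i.e. it is connected, every cutvertex lies in exactly two blocks and
every block contains at most two cutvertices. -/
def IsChainOfBlocks {V : Type*} (G : SimpleGraph V) (A : Set V) : Prop :=
  (G.induce A).Connected ∧
  (∀ v, IsCutvertexOf G A v → {B : Set V | IsBlockOf G A B ∧ v ∈ B}.ncard = 2) ∧
  (∀ B, IsBlockOf G A B → {v ∈ B | IsCutvertexOf G A v}.ncard ≤ 2)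

/-! ### Hammocks -/

/-- The boundary of a subgraph `H` of `G` : vertices of `H` incident with an
edge of `G` not in `H`. -/
def hammockBoundary {V : Type*} (G : SimpleGraph V) (H : G.Subgraph) : Set V :=
  {v | v ∈ H.verts ∧ ∃ w, G.Adj v w ∧ s(v, w) ∉ H.edgeSet}

/-- `H` is a `k`-hammock of `G` : a connected subgraph whose boundary has
exactly `k` vertices. -/
def IsHammock {V : Type*} (G : SimpleGraph V) (H : G.Subgraph) (k : ℕ) : Prop :=
  H.Connected ∧ (hammockBoundary G H).ncard = k

/-- The cone over `G` with base `B` : a new vertex joined to every member of `B`. -/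
def coneOver {W : Type*} (G : SimpleGraph W) (B : Set W) : SimpleGraph (Option W) where
  Adj a b :=
    Option.elim a (Option.elim b False (fun v => v ∈ B))
      (fun u => Option.elim b (u ∈ B) (fun v => G.Adj u v))
  symm := ⟨by
    rintro (_ | u) (_ | v) h
    · simp only [Option.elim] at h
    · exact h
    · exact h
    · exact G.adj_symm h⟩
  loopless := ⟨by
    rintro (_ | u) h
    · simp only [Option.elim] at h
    · exact G.loopless.irrefl u h⟩

/-- `G` has an embedding in the closed disc with the vertices of `B` on the
boundary of the disc; combinatorially: the cone over `G` with base `B` is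
planar. -/
def DiscEmbeddable {W : Type*} (G : SimpleGraph W) (B : Set W) : Prop :=
  IsPlanar (coneOver G B)

/-- `H` is a planar hammock of `G` : a `5`-hammock with `|V(G)| > |V(H)| ≥ 7`
embeddable in the closed disc with its boundary vertices on the disc boundary. -/
def IsPlanarHammock {V : Type*} [Fintype V] (G : SimpleGraph V) (H : G.Subgraph) : Prop :=
  IsHammock G H 5 ∧ 7 ≤ H.verts.ncard ∧ H.verts.ncard < Fintype.card V ∧
  DiscEmbeddable H.coe {v : H.verts | (v : V) ∈ hammockBoundary G H}

/-! ### Rooted subdivisions, small subgraphs, circuits -/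

/-- `G` contains a `TK₄` rooted at `W` : a subdivision of `K₄` whose branch
vertices are exactly the members of `W`. -/
def ContainsTK4RootedAt {V : Type*} (G : SimpleGraph V) (W : Set V) : Prop :=
  ∃ b : Fin 4 → V, Set.range b = W ∧ SubdivWith (⊤ : SimpleGraph (Fin 4)) G b

/-- `G` contains `K₂,₃` as a subgraph. -/
def ContainsK23 {V : Type*} (G : SimpleGraph V) : Prop :=
  ∃ x₁ x₂ x₃ x₄ x₅ : V, [x₁, x₂, x₃, x₄, x₅].Pairwise (· ≠ ·) ∧
    G.Adj x₁ x₃ ∧ G.Adj x₁ x₄ ∧ G.Adj x₁ x₅ ∧ G.Adj x₂ x₃ ∧ G.Adj x₂ x₄ ∧ G.Adj x₂ x₅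

/-- `G` contains `K₄⁻` (`K₄` minus an edge) as a subgraph. -/
def ContainsK4minus {V : Type*} (G : SimpleGraph V) : Prop :=
  ∃ a b c d : V, [a, b, c, d].Pairwise (· ≠ ·) ∧
    G.Adj a b ∧ G.Adj a c ∧ G.Adj a d ∧ G.Adj b c ∧ G.Adj b d

/-- `C` is a facial circuit of the (4-connected plane) graph `G`; by Tutte's
theorem these are exactly the induced nonseparating circuits. -/
def IsFacialCircuit {V : Type*} (G : SimpleGraph V) {a : V} (C : G.Walk a a) : Prop :=
  C.IsCycle ∧ (∀ u v, u ∈ C.support → v ∈ C.support → G.Adj u v → s(u, v) ∈ C.edges) ∧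
  (G.induce {v | v ∈ C.support}ᶜ).Connected

/-! ### Frames -/

/-- The subgraph `G(X,F)` of a frame `(X,F)` : vertex set `X ∪ V(F)`, edge set `F`. -/
def frameSubgraph {V : Type*} (G : SimpleGraph V) (X : Set V) (F : Set (Sym2 V)) :
    G.Subgraph where
  verts := X ∪ {v | ∃ e ∈ F, v ∈ e}
  Adj u v := s(u, v) ∈ F ∧ G.Adj u v
  adj_sub h := h.2
  edge_vert := fun {v w} h => Or.inr ⟨s(v, w), h.1, Sym2.mem_mk_left v w⟩
  symm := ⟨fun u v h => ⟨by rw [Sym2.eq_swap]; exact h.1, h.2.symm⟩⟩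

/-- `H` is a `U`-hammock : a `2`-hammock of `G` containing at most one element
of `U = UV ∪ UE`. -/
def IsUHammock {V : Type*} (G : SimpleGraph V) (UV : Set V) (UE : Set (Sym2 V))
    (H : G.Subgraph) : Prop :=
  IsHammock G H 2 ∧ (UV ∩ H.verts).ncard + (UE ∩ H.edgeSet).ncard ≤ 1

/-- Conditions (A.1)–(A.3) of the definition of a `U`-frame, for a collection
`B` of `U`-hammocks. -/
def FrameConds {V : Type*} (G : SimpleGraph V) (UV : Set V) (UE : Set (Sym2 V))
    (X : Set V) (F : Set (Sym2 V)) (B : Set G.Subgraph) : Prop :=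
  (∀ H ∈ B, IsUHammock G UV UE H) ∧
  -- `G` is the union of `G(X,F)` and the members of `B`
  (frameSubgraph G X F ⊔ sSup B = ⊤) ∧
  -- (A.1) each member of `B` has its two ends in distinct components of `G(X,F)`
  (∀ H ∈ B, ∃ (a b : V) (ha : a ∈ (frameSubgraph G X F).verts)
      (hb : b ∈ (frameSubgraph G X F).verts),
      a ≠ b ∧ hammockBoundary G H = {a, b} ∧
      ¬ (frameSubgraph G X F).coe.Reachable ⟨a, ha⟩ ⟨b, hb⟩) ∧
  -- (A.2) exactly three members of `B` meet `U`, and each vertex of `U` is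
  -- interior to some member of `B`
  ({H ∈ B | (UV ∩ H.verts).Nonempty ∨ (UE ∩ H.edgeSet).Nonempty}.ncard = 3) ∧
  (∀ u ∈ UV, ∃ H ∈ B, u ∈ H.verts \ hammockBoundary G H) ∧
  -- (A.3)
  X.ncard ≤ 2 ∧ (X = ∅ → B.ncard = 3)

/-- `(X, F)` is a `U`-frame of `G`. -/
def IsUFrame {V : Type*} (G : SimpleGraph V) (UV : Set V) (UE : Set (Sym2 V))
    (X : Set V) (F : Set (Sym2 V)) : Prop :=
  F ⊆ G.edgeSet ∧ (∀ e ∈ F, ∀ x ∈ X, x ∉ e) ∧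
  Nat.card (frameSubgraph G X F).coe.ConnectedComponent = 2 ∧
  ∃ B : Set G.Subgraph, FrameConds G UV UE X F B ∧
    -- (A.4) maximality of the collection `B`
    ∀ B' : Set G.Subgraph, FrameConds G UV UE X F B' →
      (∀ H ∈ B, ∃ H' ∈ B', H ≤ H') → B = B'

/-! ### Multigraphs -/

/-- The simple graph underlying the multigraph with edge-end map `ends`,
restricted to the edges outside `F`. -/
def Multi.simpleAvoiding {V E : Type*} (ends : E → Sym2 V) (F : Set E) :
    SimpleGraph V where
  Adj u v := u ≠ v ∧ ∃ e, e ∉ F ∧ ends e = s(u, v)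
  symm := ⟨by
    rintro u v ⟨h, e, he, hee⟩
    exact ⟨h.symm, e, he, hee.trans Sym2.eq_swap⟩⟩
  loopless := ⟨fun v h => h.1 rfl⟩

/-- The simple graph underlying the multigraph with edge-end map `ends`. -/
def Multi.simple {V E : Type*} (ends : E → Sym2 V) : SimpleGraph V :=
  Multi.simpleAvoiding ends ∅

/-- The multigraph with edge-end map `ends` has a circuit containing all
vertices of `AV` and all edges of `AE` : a cyclic sequence of `n ≥ 2` distinct
vertices and `n` distinct edges, consecutive vertices joined by the
corresponding edge. -/
def Multi.HasACircuit {V E : Type*} (ends : E → Sym2 V) (AV : Set V) (AE : Set E) : Prop :=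
  ∃ n : ℕ, 2 ≤ n ∧ ∃ (vtx : ZMod n → V) (edg : ZMod n → E),
    Function.Injective vtx ∧ Function.Injective edg ∧
    (∀ i, ends (edg i) = s(vtx i, vtx (i + 1))) ∧
    (∀ v ∈ AV, ∃ i, vtx i = v) ∧ (∀ e ∈ AE, ∃ i, edg i = e)

/-- `AE` is (the edge set of) a claw `K₁,₃` in the multigraph: three edges
sharing exactly one common endpoint and otherwise pairwise disjoint. -/
def Multi.IsClaw {V E : Type*} (ends : E → Sym2 V) (AE : Set E) : Prop :=
  ∃ (c x y z : V) (e₁ e₂ e₃ : E), [x, y, z].Pairwise (· ≠ ·) ∧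
    c ∉ ({x, y, z} : Set V) ∧ AE = {e₁, e₂, e₃} ∧
    ends e₁ = s(c, x) ∧ ends e₂ = s(c, y) ∧ ends e₃ = s(c, z)

section auxiliary_for_statement_14


section helpers
variable {V : Type*} {G : SimpleGraph V} [DecidableEq V]

lemma aux_mem_take_drop {x y u z : V} {W : G.Walk x y} (hW : W.IsPath)
    (hu : u ∈ W.support) (h1 : z ∈ (W.takeUntil u hu).support)
    (h2 : z ∈ (W.dropUntil u hu).support) : z = u := by
  have hnd : W.support.Nodup := hW.support_nodup
  rw [← W.take_spec hu, Walk.support_append, List.nodup_append] at hnd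
  rw [Walk.support_eq_cons (W.dropUntil u hu), List.mem_cons] at h2
  rcases h2 with h2 | h2
  · exact h2
  · exact absurd rfl (hnd.2.2 z h1 z h2)

omit [DecidableEq V] in
lemma aux_mem_closed_tail {a z : V} (C : G.Walk a a) (hC : C ≠ Walk.nil) :
    z ∈ C.support ↔ z ∈ C.support.tail := by
  cases C with
  | nil => exact absurd rfl hC
  | cons h q =>
    simp only [Walk.support_cons, List.tail_cons, List.mem_cons]
    constructor
    · rintro (rfl | h2)
      · exact q.end_mem_support
      · exact h2
    · exact Or.inr

lemma aux_cycle_split {v : V} {D : G.Walk v v} (hD : D.IsCycle)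
    {p : V} (hp : p ∈ D.support) (hpv : p ≠ v) :
    (D.takeUntil p hp).IsPath ∧ (D.dropUntil p hp).IsPath ∧
    ∀ u, u ∈ (D.takeUntil p hp).support → u ∈ (D.dropUntil p hp).support →
      u = v ∨ u = p := by
  set A := D.takeUntil p hp with hA
  set B := D.dropUntil p hp with hB
  have hnd : D.support.tail.Nodup := hD.support_nodup
  have hDs : D.support = A.support ++ B.support.tail := by
    rw [← D.take_spec hp, Walk.support_append]
  have htail : D.support.tail = A.support.tail ++ B.support.tail := by
    rw [hDs, Walk.support_eq_cons A]
    rfl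
  rw [htail, List.nodup_append] at hnd
  obtain ⟨ndA, ndB, disj⟩ := hnd
  have pA : p ∈ A.support.tail := by
    have := A.end_mem_support
    rw [Walk.support_eq_cons A, List.mem_cons] at this
    rcases this with h | h
    · exact absurd h hpv
    · exact h
  have vB : v ∈ B.support.tail := by
    have := B.end_mem_support
    rw [Walk.support_eq_cons B, List.mem_cons] at this
    rcases this with h | h
    · exact absurd h.symm hpv
    · exact h
  refine ⟨?_, ?_, ?_⟩
  · rw [Walk.isPath_def, Walk.support_eq_cons A, List.nodup_cons]
    exact ⟨fun hvA => disj v hvA v vB rfl, ndA⟩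
  · rw [Walk.isPath_def, Walk.support_eq_cons B, List.nodup_cons]
    exact ⟨fun hpB => disj p pA p hpB rfl, ndB⟩
  · intro u h1 h2
    rw [Walk.support_eq_cons A, List.mem_cons] at h1
    rw [Walk.support_eq_cons B, List.mem_cons] at h2
    rcases h1 with rfl | h1
    · exact Or.inl rfl
    · rcases h2 with rfl | h2
      · exact Or.inr rfl
      · exact absurd rfl (disj u h1 u h2)

lemma aux_three_arcs {v : V} (D : G.Walk v v) (hD : D.IsCycle)
    {p q : V} (hp : p ∈ D.support) (hq : q ∈ D.support)
    (hpv : p ≠ v) (hqv : q ≠ v) (hpq : p ≠ q) :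
    ∃ (p' q' : V), ((p' = p ∧ q' = q) ∨ (p' = q ∧ q' = p)) ∧
      ∃ (R1 : G.Walk v p') (R2 : G.Walk p' q') (R3 : G.Walk q' v),
        R1.IsPath ∧ R2.IsPath ∧ R3.IsPath ∧
        (∀ u ∈ R1.support, u ∈ D.support) ∧ (∀ u ∈ R2.support, u ∈ D.support) ∧
        (∀ u ∈ R3.support, u ∈ D.support) ∧
        (∀ u, u ∈ R1.support → u ∈ R2.support → u = p') ∧
        (∀ u, u ∈ R2.support → u ∈ R3.support → u = q') ∧
        (∀ u, u ∈ R1.support → u ∈ R3.support → u = v) := by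
  obtain ⟨hApath, hBpath, hAB⟩ := aux_cycle_split hD hp hpv
  set A := D.takeUntil p hp with hA
  set B := D.dropUntil p hp with hB
  have hAsub : ∀ u ∈ A.support, u ∈ D.support := fun u hu => D.support_takeUntil_subset hp hu
  have hBsub : ∀ u ∈ B.support, u ∈ D.support := fun u hu => D.support_dropUntil_subset hp hu
  by_cases hqB : q ∈ B.support
  · refine ⟨p, q, Or.inl ⟨rfl, rfl⟩, A, B.takeUntil q hqB, B.dropUntil q hqB,
      hApath, hBpath.takeUntil hqB, hBpath.dropUntil hqB, hAsub,
      fun u hu => hBsub u (B.support_takeUntil_subset hqB hu),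
      fun u hu => hBsub u (B.support_dropUntil_subset hqB hu), ?_, ?_, ?_⟩
    · intro u h1 h2
      rcases hAB u h1 (B.support_takeUntil_subset hqB h2) with rfl | rfl
      · -- u = v : then v ∈ takeUntil q; but v ∈ dropUntil q (end); so v = q, contra
        exact absurd (aux_mem_take_drop hBpath hqB h2 (B.dropUntil q hqB).end_mem_support) hqv.symm
      · rfl
    · intro u h1 h2
      exact aux_mem_take_drop hBpath hqB h1 h2
    · intro u h1 h2
      rcases hAB u h1 (B.support_dropUntil_subset hqB h2) with rfl | rfl
      · rfl
      · -- u = p : p ∈ dropUntil q and p ∈ takeUntil q (start) → p = q contra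
        exact absurd (aux_mem_take_drop hBpath hqB (B.takeUntil q hqB).start_mem_support h2) hpq
  · have hqA : q ∈ A.support := by
      have := hq
      rw [← D.take_spec hp, Walk.mem_support_append_iff] at this
      rcases this with h | h
      · exact h
      · exact absurd h hqB
    refine ⟨q, p, Or.inr ⟨rfl, rfl⟩, A.takeUntil q hqA, A.dropUntil q hqA, B,
      hApath.takeUntil hqA, hApath.dropUntil hqA, hBpath,
      fun u hu => hAsub u (A.support_takeUntil_subset hqA hu),
      fun u hu => hAsub u (A.support_dropUntil_subset hqA hu), hBsub, ?_, ?_, ?_⟩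
    · intro u h1 h2
      exact aux_mem_take_drop hApath hqA h1 h2
    · intro u h1 h2
      rcases hAB u (A.support_dropUntil_subset hqA h1) h2 with rfl | rfl
      · -- u = v: v ∈ dropUntil q; v ∈ takeUntil q (start) → v = q contra
        exact absurd (aux_mem_take_drop hApath hqA (A.takeUntil q hqA).start_mem_support h1) hqv.symm
      · rfl
    · intro u h1 h2
      rcases hAB u (A.support_takeUntil_subset hqA h1) h2 with rfl | rfl
      · rfl
      · exact absurd (aux_mem_take_drop hApath hqA h1 (A.dropUntil q hqA).end_mem_support) hpq

end helpers


lemma tk5_of_walks {V : Type*} {G : SimpleGraph V} (y : Fin 5 → V)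
    (hy : Function.Injective y)
    (W : ∀ i j : Fin 5, G.Walk (y i) (y j))
    (hrev : ∀ i j, W j i = (W i j).reverse)
    (hpath : ∀ i j : Fin 5, i < j → (W i j).IsPath)
    (havoid : ∀ i j : Fin 5, i < j → ∀ k, y k ∈ (W i j).support → k = i ∨ k = j)
    (tag : V → Fin 5 × Fin 5)
    (htag : ∀ i j : Fin 5, i < j → ∀ u ∈ (W i j).support, u ∈ Set.range y ∨ tag u = (i, j)) :
    ContainsTK5 G := by
  have hmem : ∀ (i j : Fin 5) (u : V), u ∈ (W i j).support ↔ u ∈ (W j i).support := by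
    intro i j u
    rw [hrev i j, Walk.support_reverse, List.mem_reverse]
  refine ⟨y, hy, fun i j _ => W i j, ?_, ?_, ?_⟩
  · intro i j h
    rcases h.ne.lt_or_gt with hlt | hlt
    · exact hpath i j hlt
    · show (W i j).IsPath
      rw [hrev j i]
      exact (hpath j i hlt).reverse
  · intro i j h u hu hur
    obtain ⟨k, rfl⟩ := hur
    rcases h.ne.lt_or_gt with hlt | hlt
    · rcases havoid i j hlt k hu with rfl | rfl
      · exact Or.inl rfl
      · exact Or.inr rfl
    · rcases havoid j i hlt k ((hmem i j _).mp hu) with rfl | rfl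
      · exact Or.inr rfl
      · exact Or.inl rfl
  · intro i j k l h h' hne u hu hu'
    have key : ∀ (i j : Fin 5), i ≠ j → ∀ u, u ∈ (W i j).support →
        u ∈ Set.range y ∨ ∃ a b : Fin 5, a < b ∧ s(a, b) = s(i, j) ∧ tag u = (a, b) := by
      intro i j hij u hu
      rcases hij.lt_or_gt with hlt | hlt
      · rcases htag i j hlt u hu with h1 | h1
        · exact Or.inl h1
        · exact Or.inr ⟨i, j, hlt, rfl, h1⟩
      · rcases htag j i hlt u ((hmem i j u).mp hu) with h1 | h1
        · exact Or.inl h1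
        · exact Or.inr ⟨j, i, hlt, Sym2.eq_swap, h1⟩
    rcases key i j h.ne u hu with h1 | ⟨a, b, hab, habs, htagu⟩
    · exact h1
    rcases key k l h'.ne u hu' with h2 | ⟨c, d, hcd, hcds, htagu'⟩
    · exact h2
    exfalso
    have hpq : (a, b) = (c, d) := htagu.symm.trans htagu'
    rw [Prod.mk.injEq] at hpq
    apply hne
    rw [← habs, ← hcds, hpq.1, hpq.2]


section more_aux
variable {V : Type*} {G : SimpleGraph V}

set_option maxHeartbeats 1000000 in
lemma aux_core {x1 x2 v p q r : V}
    (e1p : G.Adj x1 p) (e1q : G.Adj x1 q) (e1r : G.Adj x1 r)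
    (e2p : G.Adj x2 p) (e2q : G.Adj x2 q) (e2r : G.Adj x2 r)
    (hx12 : x1 ≠ x2) (hvx1 : v ≠ x1) (hvx2 : v ≠ x2)
    (hpq : p ≠ q) (hpr : p ≠ r) (hqr : q ≠ r)
    (hpv : p ≠ v) (hqv : q ≠ v) (hrv : r ≠ v)
    (hpx1 : p ≠ x1) (hpx2 : p ≠ x2) (hqx1 : q ≠ x1) (hqx2 : q ≠ x2)
    (hrx1 : r ≠ x1) (hrx2 : r ≠ x2)
    (P1 : G.Walk x1 v) (P2 : G.Walk v x2) (hP1 : P1.IsPath) (hP2 : P2.IsPath)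
    (hP12 : ∀ u, u ∈ P1.support → u ∈ P2.support → u = v)
    (R1 : G.Walk v p) (R2 : G.Walk p q) (R3 : G.Walk q v)
    (hR1 : R1.IsPath) (hR2 : R2.IsPath) (hR3 : R3.IsPath)
    (hR12 : ∀ u, u ∈ R1.support → u ∈ R2.support → u = p)
    (hR23 : ∀ u, u ∈ R2.support → u ∈ R3.support → u = q)
    (hR13 : ∀ u, u ∈ R1.support → u ∈ R3.support → u = v)
    (hRP : ∀ u, (u ∈ R1.support ∨ u ∈ R2.support ∨ u ∈ R3.support) →
      (u ∈ P1.support ∨ u ∈ P2.support) → u = v)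
    (hrR1 : r ∉ R1.support) (hrR2 : r ∉ R2.support) (hrR3 : r ∉ R3.support)
    (hrP1 : r ∉ P1.support) (hrP2 : r ∉ P2.support) :
    ContainsTK5 G := by
  classical
  -- derived non-membership facts
  have nx2P1 : x2 ∉ P1.support := fun h => hvx2 (hP12 x2 h P2.end_mem_support).symm
  have nx1P2 : x1 ∉ P2.support := fun h => hvx1 (hP12 x1 P1.start_mem_support h).symm
  have npP1 : p ∉ P1.support := fun h => hpv (hRP p (Or.inl R1.end_mem_support) (Or.inl h))
  have npP2 : p ∉ P2.support := fun h => hpv (hRP p (Or.inl R1.end_mem_support) (Or.inr h))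
  have nqP1 : q ∉ P1.support := fun h => hqv (hRP q (Or.inr (Or.inr R3.start_mem_support)) (Or.inl h))
  have nqP2 : q ∉ P2.support := fun h => hqv (hRP q (Or.inr (Or.inr R3.start_mem_support)) (Or.inr h))
  have nx1R1 : x1 ∉ R1.support := fun h => hvx1 (hRP x1 (Or.inl h) (Or.inl P1.start_mem_support)).symm
  have nx1R2 : x1 ∉ R2.support := fun h => hvx1 (hRP x1 (Or.inr (Or.inl h)) (Or.inl P1.start_mem_support)).symm
  have nx1R3 : x1 ∉ R3.support := fun h => hvx1 (hRP x1 (Or.inr (Or.inr h)) (Or.inl P1.start_mem_support)).symm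
  have nx2R1 : x2 ∉ R1.support := fun h => hvx2 (hRP x2 (Or.inl h) (Or.inr P2.end_mem_support)).symm
  have nx2R2 : x2 ∉ R2.support := fun h => hvx2 (hRP x2 (Or.inr (Or.inl h)) (Or.inr P2.end_mem_support)).symm
  have nx2R3 : x2 ∉ R3.support := fun h => hvx2 (hRP x2 (Or.inr (Or.inr h)) (Or.inr P2.end_mem_support)).symm
  have nqR1 : q ∉ R1.support := fun h => hqv (hR13 q h R3.start_mem_support)
  have npR3 : p ∉ R3.support := fun h => hpv (hR13 p R1.end_mem_support h)
  have nvR2 : v ∉ R2.support := fun h => hpv (hR12 v R1.start_mem_support h).symm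
  -- the branch map
  set y : Fin 5 → V := fun i => match i with
    | ⟨0, _⟩ => x1 | ⟨1, _⟩ => x2 | ⟨2, _⟩ => v | ⟨3, _⟩ => p | ⟨4, _⟩ => q
    | ⟨n + 5, h⟩ => absurd h (by omega) with hy_def
  have hy : Function.Injective y := by
    intro a b hab
    fin_cases a <;> fin_cases b <;>
      first
      | rfl
      | exact absurd hab hx12 | exact absurd hab hx12.symm
      | exact absurd hab hvx1.symm | exact absurd hab hvx1
      | exact absurd hab hvx2.symm | exact absurd hab hvx2
      | exact absurd hab hpq | exact absurd hab hpq.symm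
      | exact absurd hab hpv.symm | exact absurd hab hpv
      | exact absurd hab hqv.symm | exact absurd hab hqv
      | exact absurd hab hpx1.symm | exact absurd hab hpx1
      | exact absurd hab hpx2.symm | exact absurd hab hpx2
      | exact absurd hab hqx1.symm | exact absurd hab hqx1
      | exact absurd hab hqx2.symm | exact absurd hab hqx2
  -- the walk W01 through r
  set W01 : G.Walk x1 x2 := Walk.cons e1r (Walk.cons e2r.symm Walk.nil) with hW01
  have hW01path : W01.IsPath := by
    rw [Walk.isPath_def]
    simp [hW01, hrx2, hx12, Ne.symm hrx1]
  have hW01mem : ∀ u, u ∈ W01.support ↔ (u = x1 ∨ u = r ∨ u = x2) := by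
    intro u; simp [hW01]
  -- the full family of walks
  set W : ∀ i j : Fin 5, G.Walk (y i) (y j) := fun i j => match i, j with
    | ⟨0, _⟩, ⟨0, _⟩ => Walk.nil
    | ⟨0, _⟩, ⟨1, _⟩ => W01
    | ⟨0, _⟩, ⟨2, _⟩ => P1
    | ⟨0, _⟩, ⟨3, _⟩ => e1p.toWalk
    | ⟨0, _⟩, ⟨4, _⟩ => e1q.toWalk
    | ⟨1, _⟩, ⟨0, _⟩ => W01.reverse
    | ⟨1, _⟩, ⟨1, _⟩ => Walk.nil
    | ⟨1, _⟩, ⟨2, _⟩ => P2.reverse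
    | ⟨1, _⟩, ⟨3, _⟩ => e2p.toWalk
    | ⟨1, _⟩, ⟨4, _⟩ => e2q.toWalk
    | ⟨2, _⟩, ⟨0, _⟩ => P1.reverse
    | ⟨2, _⟩, ⟨1, _⟩ => P2.reverse.reverse
    | ⟨2, _⟩, ⟨2, _⟩ => Walk.nil
    | ⟨2, _⟩, ⟨3, _⟩ => R1
    | ⟨2, _⟩, ⟨4, _⟩ => R3.reverse
    | ⟨3, _⟩, ⟨0, _⟩ => e1p.toWalk.reverse
    | ⟨3, _⟩, ⟨1, _⟩ => e2p.toWalk.reverse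
    | ⟨3, _⟩, ⟨2, _⟩ => R1.reverse
    | ⟨3, _⟩, ⟨3, _⟩ => Walk.nil
    | ⟨3, _⟩, ⟨4, _⟩ => R2
    | ⟨4, _⟩, ⟨0, _⟩ => e1q.toWalk.reverse
    | ⟨4, _⟩, ⟨1, _⟩ => e2q.toWalk.reverse
    | ⟨4, _⟩, ⟨2, _⟩ => R3.reverse.reverse
    | ⟨4, _⟩, ⟨3, _⟩ => R2.reverse
    | ⟨4, _⟩, ⟨4, _⟩ => Walk.nil
    | ⟨_ + 5, h⟩, _ => absurd h (by omega)
    | _, ⟨_ + 5, h⟩ => absurd h (by omega) with hW_def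
  have hedgepath : ∀ {a b : V} (h : G.Adj a b), h.toWalk.IsPath := by
    intro a b h
    rw [Walk.isPath_def]
    simp [Adj.toWalk, h.ne]
  set tag : V → Fin 5 × Fin 5 := fun u =>
    if u ∈ P1.support then ((0 : Fin 5), (2 : Fin 5))
    else if u ∈ P2.support then (1, 2)
    else if u ∈ R1.support then (2, 3)
    else if u ∈ R2.support then (3, 4)
    else if u ∈ R3.support then (2, 4)
    else (0, 1) with htag_def
  apply tk5_of_walks y hy W (tag := tag)
  · intro i j
    fin_cases i <;> fin_cases j <;>
      first
        | rfl
        | exact (Walk.reverse_reverse _).symm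
  · intro i j hij
    fin_cases i <;> fin_cases j <;>
      first
        | exact absurd hij (by decide)
        | exact hW01path
        | exact hP1
        | exact hP2.reverse
        | exact hedgepath _
        | exact hR1
        | exact hR3.reverse
        | exact hR2
  · -- havoid
    have memrev : ∀ {a b : V} (w : G.Walk a b) {z : V},
        z ∈ w.reverse.support ↔ z ∈ w.support := by
      intro a b w z
      rw [Walk.support_reverse, List.mem_reverse]
    have memtoWalk : ∀ {a b z : V} (h : G.Adj a b),
        z ∈ h.toWalk.support ↔ z = a ∨ z = b := by
      intro a b z h
      simp [Adj.toWalk]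
    have ntoWalk : ∀ {a b z : V} (h : G.Adj a b), z ≠ a → z ≠ b →
        z ∉ h.toWalk.support := by
      intro a b z h h1 h2 hz
      rcases (memtoWalk h).mp hz with rfl | rfl
      · exact h1 rfl
      · exact h2 rfl
    have nvW01 : v ∉ W01.support := fun h => by
      rcases (hW01mem v).mp h with h | h | h
      exacts [hvx1 h, hrv h.symm, hvx2 h]
    have npW01 : p ∉ W01.support := fun h => by
      rcases (hW01mem p).mp h with h | h | h
      exacts [hpx1 h, hpr h, hpx2 h]
    have nqW01 : q ∉ W01.support := fun h => by
      rcases (hW01mem q).mp h with h | h | h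
      exacts [hqx1 h, hqr h, hqx2 h]
    intro i j hij k hk
    fin_cases i <;> fin_cases j <;> fin_cases k <;>
      first
      | exact absurd hij (by decide)
      | exact Or.inl (by decide)
      | exact Or.inr (by decide)
      | exact absurd hk nvW01
      | exact absurd hk npW01
      | exact absurd hk nqW01
      | exact absurd hk nx2P1
      | exact absurd hk npP1
      | exact absurd hk nqP1
      | exact absurd hk (ntoWalk _ hx12.symm (Ne.symm hpx2))
      | exact absurd hk (ntoWalk _ hvx1 (Ne.symm hpv))
      | exact absurd hk (ntoWalk _ hqx1 hqv.symm.symm)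
      | exact absurd hk (ntoWalk _ hqx1 (by exact fun hh => hpq hh.symm))
      | exact absurd hk (ntoWalk _ hx12.symm (Ne.symm hqx2))
      | exact absurd hk (ntoWalk _ hvx1 (Ne.symm hqv))
      | exact absurd hk (ntoWalk _ hpx1 (by exact fun hh => hpq hh))
      | exact absurd hk (ntoWalk _ hx12 (Ne.symm hpx1))
      | exact absurd hk (ntoWalk _ hvx2 (Ne.symm hpv))
      | exact absurd hk (ntoWalk _ hqx2 (by exact fun hh => hpq hh.symm))
      | exact absurd hk (ntoWalk _ hx12 (Ne.symm hqx1))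
      | exact absurd hk (ntoWalk _ hvx2 (Ne.symm hqv))
      | exact absurd hk (ntoWalk _ hpx2 (by exact fun hh => hpq hh))
      | exact absurd ((memrev P2).mp hk) nx1P2
      | exact absurd ((memrev P2).mp hk) npP2
      | exact absurd ((memrev P2).mp hk) nqP2
      | exact absurd hk nx1R1
      | exact absurd hk nx2R1
      | exact absurd hk nqR1
      | exact absurd ((memrev R3).mp hk) nx1R3
      | exact absurd ((memrev R3).mp hk) nx2R3
      | exact absurd ((memrev R3).mp hk) npR3
      | exact absurd hk nx1R2
      | exact absurd hk nx2R2
      | exact absurd hk nvR2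
  · -- htag property
    have memrev : ∀ {a b : V} (w : G.Walk a b) {z : V},
        z ∈ w.reverse.support ↔ z ∈ w.support := by
      intro a b w z
      rw [Walk.support_reverse, List.mem_reverse]
    have memtoWalk : ∀ {a b z : V} (h : G.Adj a b),
        z ∈ h.toWalk.support ↔ z = a ∨ z = b := by
      intro a b z h
      simp [Adj.toWalk]
    intro i j hij u hu
    fin_cases i <;> fin_cases j
    · exact absurd hij (by decide)
    · -- pair (0,1)
      rcases (hW01mem u).mp hu with rfl | rfl | rfl
      · exact Or.inl ⟨⟨0, by omega⟩, rfl⟩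
      · refine Or.inr ?_
        show tag u = ((0 : Fin 5), (1 : Fin 5))
        simp only [htag_def]
        rw [if_neg hrP1, if_neg hrP2, if_neg hrR1, if_neg hrR2, if_neg hrR3]
      · exact Or.inl ⟨⟨1, by omega⟩, rfl⟩
    · -- pair (0,2)
      refine Or.inr ?_
      show tag u = ((0 : Fin 5), (2 : Fin 5))
      simp only [htag_def]
      rw [if_pos (show u ∈ P1.support from hu)]
    · -- pair (0,3)
      rcases (memtoWalk e1p).mp hu with rfl | rfl
      · exact Or.inl ⟨⟨0, by omega⟩, rfl⟩
      · exact Or.inl ⟨⟨3, by omega⟩, rfl⟩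
    · -- pair (0,4)
      rcases (memtoWalk e1q).mp hu with rfl | rfl
      · exact Or.inl ⟨⟨0, by omega⟩, rfl⟩
      · exact Or.inl ⟨⟨4, by omega⟩, rfl⟩
    · exact absurd hij (by decide)
    · exact absurd hij (by decide)
    · -- pair (1,2)
      have hu' : u ∈ P2.support := (memrev P2).mp hu
      by_cases h1 : u ∈ P1.support
      · exact Or.inl ⟨⟨2, by omega⟩, (hP12 u h1 hu').symm⟩
      · refine Or.inr ?_
        show tag u = ((1 : Fin 5), (2 : Fin 5))
        simp only [htag_def]
        rw [if_neg h1, if_pos hu']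
    · -- pair (1,3)
      rcases (memtoWalk e2p).mp hu with rfl | rfl
      · exact Or.inl ⟨⟨1, by omega⟩, rfl⟩
      · exact Or.inl ⟨⟨3, by omega⟩, rfl⟩
    · -- pair (1,4)
      rcases (memtoWalk e2q).mp hu with rfl | rfl
      · exact Or.inl ⟨⟨1, by omega⟩, rfl⟩
      · exact Or.inl ⟨⟨4, by omega⟩, rfl⟩
    · exact absurd hij (by decide)
    · exact absurd hij (by decide)
    · exact absurd hij (by decide)
    · -- pair (2,3)
      have hu' : u ∈ R1.support := hu
      by_cases h1 : u ∈ P1.support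
      · exact Or.inl ⟨⟨2, by omega⟩, (hRP u (Or.inl hu') (Or.inl h1)).symm⟩
      by_cases h2 : u ∈ P2.support
      · exact Or.inl ⟨⟨2, by omega⟩, (hRP u (Or.inl hu') (Or.inr h2)).symm⟩
      refine Or.inr ?_
      show tag u = ((2 : Fin 5), (3 : Fin 5))
      simp only [htag_def]
      rw [if_neg h1, if_neg h2, if_pos hu']
    · -- pair (2,4)
      have hu' : u ∈ R3.support := (memrev R3).mp hu
      by_cases h1 : u ∈ P1.support
      · exact Or.inl ⟨⟨2, by omega⟩, (hRP u (Or.inr (Or.inr hu')) (Or.inl h1)).symm⟩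
      by_cases h2 : u ∈ P2.support
      · exact Or.inl ⟨⟨2, by omega⟩, (hRP u (Or.inr (Or.inr hu')) (Or.inr h2)).symm⟩
      by_cases h3 : u ∈ R1.support
      · exact Or.inl ⟨⟨2, by omega⟩, (hR13 u h3 hu').symm⟩
      by_cases h4 : u ∈ R2.support
      · exact Or.inl ⟨⟨4, by omega⟩, (hR23 u h4 hu').symm⟩
      refine Or.inr ?_
      show tag u = ((2 : Fin 5), (4 : Fin 5))
      simp only [htag_def]
      rw [if_neg h1, if_neg h2, if_neg h3, if_neg h4, if_pos hu']
    · exact absurd hij (by decide)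
    · exact absurd hij (by decide)
    · exact absurd hij (by decide)
    · exact absurd hij (by decide)
    · -- pair (3,4)
      have hu' : u ∈ R2.support := hu
      by_cases h1 : u ∈ P1.support
      · exact Or.inl ⟨⟨2, by omega⟩, (hRP u (Or.inr (Or.inl hu')) (Or.inl h1)).symm⟩
      by_cases h2 : u ∈ P2.support
      · exact Or.inl ⟨⟨2, by omega⟩, (hRP u (Or.inr (Or.inl hu')) (Or.inr h2)).symm⟩
      by_cases h3 : u ∈ R1.support
      · exact Or.inl ⟨⟨3, by omega⟩, (hR12 u h3 hu').symm⟩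
      refine Or.inr ?_
      show tag u = ((3 : Fin 5), (4 : Fin 5))
      simp only [htag_def]
      rw [if_neg h1, if_neg h2, if_neg h3, if_pos hu']
    · exact absurd hij (by decide)
    · exact absurd hij (by decide)
    · exact absurd hij (by decide)
    · exact absurd hij (by decide)
    · exact absurd hij (by decide)


variable [DecidableEq V] in
lemma aux_finish {x1 x2 p q r v : V}
    (e1p : G.Adj x1 p) (e1q : G.Adj x1 q) (e1r : G.Adj x1 r)
    (e2p : G.Adj x2 p) (e2q : G.Adj x2 q) (e2r : G.Adj x2 r)
    (hx12 : x1 ≠ x2) (hvx1 : v ≠ x1) (hvx2 : v ≠ x2)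
    (hpq : p ≠ q) (hpr : p ≠ r) (hqr : q ≠ r)
    (hpx1 : p ≠ x1) (hpx2 : p ≠ x2) (hqx1 : q ≠ x1) (hqx2 : q ≠ x2)
    (hrx1 : r ≠ x1) (hrx2 : r ≠ x2)
    (P : G.Walk x1 x2) (hP : P.IsPath) (hv : v ∈ P.support)
    (hpP : p ∉ P.support) (hqP : q ∉ P.support) (hrP : r ∉ P.support)
    {a : V} (C : G.Walk a a) (hC : C.IsCycle) (hvC : v ∈ C.support)
    (hCP : ∀ u ∈ C.support, u ∉ P.support ∨ u = v)
    (hpC : p ∈ C.support) (hqC : q ∈ C.support) (hrC : r ∉ C.support) :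
    ContainsTK5 G := by
  have hpv : p ≠ v := fun h => hpP (h ▸ hv)
  have hqv : q ≠ v := fun h => hqP (h ▸ hv)
  have hrv : r ≠ v := fun h => hrP (h ▸ hv)
  set D := C.rotate v hvC with hD_def
  have hD : D.IsCycle := hC.rotate hvC
  have memD : ∀ z : V, z ∈ D.support ↔ z ∈ C.support := by
    intro z
    rw [aux_mem_closed_tail D hD.ne_nil, aux_mem_closed_tail C hC.ne_nil]
    exact (Walk.support_rotate C v hvC).mem_iff
  have hpD : p ∈ D.support := (memD p).mpr hpC
  have hqD : q ∈ D.support := (memD q).mpr hqC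
  set P1 := P.takeUntil v hv with hP1_def
  set P2 := P.dropUntil v hv with hP2_def
  have hP1 : P1.IsPath := hP.takeUntil hv
  have hP2 : P2.IsPath := hP.dropUntil hv
  have hP12 : ∀ u, u ∈ P1.support → u ∈ P2.support → u = v :=
    fun u h1 h2 => aux_mem_take_drop hP hv h1 h2
  have hP1sub : ∀ u ∈ P1.support, u ∈ P.support := fun u h => P.support_takeUntil_subset hv h
  have hP2sub : ∀ u ∈ P2.support, u ∈ P.support := fun u h => P.support_dropUntil_subset hv h
  obtain ⟨p', q', hor, R1, R2, R3, h1p, h2p, h3p, h1s, h2s, h3s, h12, h23, h13⟩ :=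
    aux_three_arcs D hD hpD hqD hpv hqv hpq
  have key : ∀ u, (u ∈ R1.support ∨ u ∈ R2.support ∨ u ∈ R3.support) →
      (u ∈ P1.support ∨ u ∈ P2.support) → u = v := by
    intro u hR hP'
    have huC : u ∈ C.support := (memD u).mp (by
      rcases hR with h | h | h
      exacts [h1s u h, h2s u h, h3s u h])
    have huP : u ∈ P.support := by
      rcases hP' with h | h
      exacts [hP1sub u h, hP2sub u h]
    rcases hCP u huC with h | h
    · exact absurd huP h
    · exact h
  have nrR1 : r ∉ R1.support := fun h => hrC ((memD r).mp (h1s r h))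
  have nrR2 : r ∉ R2.support := fun h => hrC ((memD r).mp (h2s r h))
  have nrR3 : r ∉ R3.support := fun h => hrC ((memD r).mp (h3s r h))
  have nrP1 : r ∉ P1.support := fun h => hrP (hP1sub r h)
  have nrP2 : r ∉ P2.support := fun h => hrP (hP2sub r h)
  rcases hor with ⟨rfl, rfl⟩ | ⟨rfl, rfl⟩
  · exact aux_core e1p e1q e1r e2p e2q e2r hx12 hvx1 hvx2 hpq hpr hqr hpv hqv hrv
      hpx1 hpx2 hqx1 hqx2 hrx1 hrx2 P1 P2 hP1 hP2 hP12 R1 R2 R3 h1p h2p h3p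
      h12 h23 h13 key nrR1 nrR2 nrR3 nrP1 nrP2
  · exact aux_core e1q e1p e1r e2q e2p e2r hx12 hvx1 hvx2 hpq.symm hqr hpr hqv hpv hrv
      hqx1 hqx2 hpx1 hpx2 hrx1 hrx2 P1 P2 hP1 hP2 hP12 R1 R2 R3 h1p h2p h3p
      h12 h23 h13 key nrR1 nrR2 nrR3 nrP1 nrP2

end more_aux
end auxiliary_for_statement_14

theorem statement_14 {V : Type} [Fintype V] (G : SimpleGraph V)
    (x₁ x₂ x₃ x₄ x₅ : V)
    (hdist : [x₁, x₂, x₃, x₄, x₅].Pairwise (· ≠ ·))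
    (e₁₃ : G.Adj x₁ x₃) (e₁₄ : G.Adj x₁ x₄) (e₁₅ : G.Adj x₁ x₅)
    (e₂₃ : G.Adj x₂ x₃) (e₂₄ : G.Adj x₂ x₄) (e₂₅ : G.Adj x₂ x₅)
    (P : G.Walk x₁ x₂) (hP : P.IsPath)
    (h₃P : x₃ ∉ P.support) (h₄P : x₄ ∉ P.support) (h₅P : x₅ ∉ P.support)
    (v : V) (hv : v ∈ P.support) (hv₁ : v ≠ x₁) (hv₂ : v ≠ x₂)
    (hcirc : ∃ (a : V) (C : G.Walk a a), C.IsCycle ∧ v ∈ C.support ∧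
      (∀ u ∈ C.support, u ∉ P.support ∨ u = v) ∧
      (({x₃, x₄, x₅} : Set V) ∩ {u | u ∈ C.support}).ncard = 2) :
    ContainsTK5 G := by
  classical
  simp only [List.pairwise_cons, List.mem_cons, List.not_mem_nil, or_false,
    List.mem_singleton, forall_eq_or_imp, forall_eq, List.Pairwise.nil, and_true] at hdist
  obtain ⟨⟨h12, h13, h14, h15⟩, ⟨h23, h24, h25⟩, ⟨h34, h35⟩, h45, -⟩ := hdist
  obtain ⟨a, C, hC, hvC, hCP, hn2⟩ := hcirc
  by_cases h3 : x₃ ∈ C.support <;> by_cases h4 : x₄ ∈ C.support <;>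
    by_cases h5 : x₅ ∈ C.support
  · -- all three on C : contradiction with ncard = 2
    exfalso
    have hset : ({x₃, x₄, x₅} : Set V) ∩ {u | u ∈ C.support} = {x₃, x₄, x₅} := by
      apply Set.inter_eq_left.mpr
      rintro z (rfl | rfl | rfl) <;> exact ‹_›
    rw [hset] at hn2
    rw [Set.ncard_insert_of_notMem (by simp [h34, h35]),
      Set.ncard_pair h45] at hn2
    omega
  · exact aux_finish e₁₃ e₁₄ e₁₅ e₂₃ e₂₄ e₂₅ h12 hv₁ hv₂ h34 h35 h45
      (Ne.symm h13) (Ne.symm h23) (Ne.symm h14) (Ne.symm h24) (Ne.symm h15) (Ne.symm h25)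
      P hP hv h₃P h₄P h₅P C hC hvC hCP h3 h4 h5
  · exact aux_finish e₁₃ e₁₅ e₁₄ e₂₃ e₂₅ e₂₄ h12 hv₁ hv₂ h35 h34 (Ne.symm h45)
      (Ne.symm h13) (Ne.symm h23) (Ne.symm h15) (Ne.symm h25) (Ne.symm h14) (Ne.symm h24)
      P hP hv h₃P h₅P h₄P C hC hvC hCP h3 h5 h4
  · -- only x₃
    exfalso
    have hset : ({x₃, x₄, x₅} : Set V) ∩ {u | u ∈ C.support} = {x₃} := by
      ext z
      simp only [Set.mem_inter_iff, Set.mem_insert_iff, Set.mem_singleton_iff,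
        Set.mem_setOf_eq]
      constructor
      · rintro ⟨rfl | rfl | rfl, hz⟩
        · rfl
        · exact absurd hz h4
        · exact absurd hz h5
      · rintro rfl
        exact ⟨Or.inl rfl, h3⟩
    rw [hset, Set.ncard_singleton] at hn2
    omega
  · exact aux_finish e₁₄ e₁₅ e₁₃ e₂₄ e₂₅ e₂₃ h12 hv₁ hv₂ h45 (Ne.symm h34) (Ne.symm h35)
      (Ne.symm h14) (Ne.symm h24) (Ne.symm h15) (Ne.symm h25) (Ne.symm h13) (Ne.symm h23)
      P hP hv h₄P h₅P h₃P C hC hvC hCP h4 h5 h3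
  · exfalso
    have hset : ({x₃, x₄, x₅} : Set V) ∩ {u | u ∈ C.support} = {x₄} := by
      ext z
      simp only [Set.mem_inter_iff, Set.mem_insert_iff, Set.mem_singleton_iff,
        Set.mem_setOf_eq]
      constructor
      · rintro ⟨rfl | rfl | rfl, hz⟩
        · exact absurd hz h3
        · rfl
        · exact absurd hz h5
      · rintro rfl
        exact ⟨Or.inr (Or.inl rfl), h4⟩
    rw [hset, Set.ncard_singleton] at hn2
    omega
  · exfalso
    have hset : ({x₃, x₄, x₅} : Set V) ∩ {u | u ∈ C.support} = {x₅} := by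
      ext z
      simp only [Set.mem_inter_iff, Set.mem_insert_iff, Set.mem_singleton_iff,
        Set.mem_setOf_eq]
      constructor
      · rintro ⟨rfl | rfl | rfl, hz⟩
        · exact absurd hz h3
        · exact absurd hz h4
        · rfl
      · rintro rfl
        exact ⟨Or.inr (Or.inr rfl), h5⟩
    rw [hset, Set.ncard_singleton] at hn2
    omega
  · exfalso
    have hset : ({x₃, x₄, x₅} : Set V) ∩ {u | u ∈ C.support} = ∅ := by
      ext z
      simp only [Set.mem_inter_iff, Set.mem_insert_iff, Set.mem_singleton_iff,
        Set.mem_setOf_eq, Set.mem_empty_iff_false, iff_false, not_and]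
      rintro (rfl | rfl | rfl)
      exacts [h3, h4, h5]
    rw [hset, Set.ncard_empty] at hn2
    omega
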